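/- Let φ be either the symmetric linear-core surrogate Φ̄ or the one-sided linear-core surrogate Φ̃. For all real numbers a ≥ b ≥ 0 and every m ≤ 0, the pairwise regret satisfies a·φ(m) + b·φ(−m) − inf_{u ∈ ℝ} ( a·φ(u) + b·φ(−u) ) ≥ (a − b)·(1 − m); in particular it is at least a − b. -/

import Mathlib

/-- The symmetric linear-core surrogate `Φ̄`. -/
noncomputable def barPhi (Φ : ℝ → ℝ) (u : ℝ) : ℝ :=
  if 1 < u then Φ (1 - u) / deriv Φ 0
  else if u < -1 then Φ (-1 - u) / deriv Φ 0 + 2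
  else -u + 1 + Φ 0 / deriv Φ 0

/-- The one-sided linear-core surrogate `Φ̃`. -/
noncomputable def tildePhi (Φ : ℝ → ℝ) (u : ℝ) : ℝ :=
  if 1 < u then Φ (1 - u) / deriv Φ 0
  else -u + 1 + Φ 0 / deriv Φ 0

/-- Tangent line lies below a convex differentiable function. -/
lemma tangent_le (Φ : ℝ → ℝ) (hconv : ConvexOn ℝ Set.univ Φ)
    (hdiff : Differentiable ℝ Φ) (x : ℝ) :
    Φ 0 + deriv Φ 0 * x ≤ Φ x := by
  rcases lt_trichotomy x 0 with h | h | h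
  · have hs := hconv.slope_le_of_hasDerivAt (Set.mem_univ x) (Set.mem_univ 0) h
      (hdiff 0).hasDerivAt
    rw [slope_def_field] at hs
    rw [div_le_iff₀ (by linarith)] at hs
    nlinarith
  · simp [h]
  · have hs := hconv.deriv_le_slope (Set.mem_univ 0) (Set.mem_univ x) h (hdiff 0)
    rw [slope_def_field] at hs
    rw [le_div_iff₀ (by linarith : (0:ℝ) < x - 0)] at hs
    nlinarith

/-- for `φ ∈ {Φ̄, Φ̃}`, `a ≥ b ≥ 0` and `m ≤ 0`, the pairwise regret
`a·φ(m) + b·φ(-m) - inf_u (a·φ(u) + b·φ(-u))` is at least `(a - b)·(1 - m)`, and in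
particular at least `a - b`. -/
theorem pairwise_regret_lower_bound (Φ : ℝ → ℝ)
    (hconv : ConvexOn ℝ Set.univ Φ) (hdiff : Differentiable ℝ Φ)
    (hnn : ∀ u, 0 ≤ Φ u) (hd0 : 0 < deriv Φ 0)
    (φ : ℝ → ℝ) (hφ : φ = barPhi Φ ∨ φ = tildePhi Φ)
    (a b : ℝ) (hb : 0 ≤ b) (hab : b ≤ a) (m : ℝ) (hm : m ≤ 0) :
    (a - b) * (1 - m) ≤
      a * φ m + b * φ (-m) - ⨅ u : ℝ, (a * φ u + b * φ (-u)) ∧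
    a - b ≤ a * φ m + b * φ (-m) - ⨅ u : ℝ, (a * φ u + b * φ (-u)) := by
  set d := deriv Φ 0 with hd
  set c := Φ 0 / d with hc
  have ha : 0 ≤ a := le_trans hb hab
  have hcd : c * d = Φ 0 := div_mul_cancel₀ _ hd0.ne'
  have hc0 : 0 ≤ c := div_nonneg (hnn 0) hd0.le
  -- the linear lower bound
  have key : ∀ u : ℝ, -u + 1 + c ≤ φ u := by
    intro u
    rcases hφ with rfl | rfl
    · unfold barPhi
      split_ifs with h1 h2
      · rw [le_div_iff₀ hd0]
        nlinarith [tangent_le Φ hconv hdiff (1 - u)]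
      · rw [← sub_le_iff_le_add, le_div_iff₀ hd0]
        nlinarith [tangent_le Φ hconv hdiff (-1 - u)]
      · exact le_rfl
    · unfold tildePhi
      split_ifs with h1
      · rw [le_div_iff₀ hd0]
        nlinarith [tangent_le Φ hconv hdiff (1 - u)]
      · exact le_rfl
  -- nonnegativity of φ
  have hφnn : ∀ u : ℝ, 0 ≤ φ u := by
    intro u
    rcases hφ with rfl | rfl
    · unfold barPhi
      split_ifs with h1 h2
      · exact div_nonneg (hnn _) hd0.le
      · have := div_nonneg (hnn (-1-u)) hd0.le; linarith
      · push_neg at h1; linarith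
    · unfold tildePhi
      split_ifs with h1
      · exact div_nonneg (hnn _) hd0.le
      · push_neg at h1; linarith
  -- exact values at ±1
  have hφ1 : φ 1 = c := by
    rcases hφ with rfl | rfl
    · unfold barPhi; norm_num; rfl
    · unfold tildePhi; norm_num; rfl
  have hφm1 : φ (-1) = 2 + c := by
    rcases hφ with rfl | rfl
    · unfold barPhi; norm_num; rfl
    · unfold tildePhi; norm_num; rfl
  -- the infimum is bounded above by the value at u = 1
  have hbdd : BddBelow (Set.range fun u : ℝ => a * φ u + b * φ (-u)) := by
    refine ⟨0, ?_⟩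
    rintro x ⟨u, rfl⟩
    have := hφnn u
    have := hφnn (-u)
    positivity
  have hinf : (⨅ u : ℝ, (a * φ u + b * φ (-u))) ≤ a * c + b * (2 + c) := by
    have := ciInf_le hbdd (1 : ℝ)
    rwa [hφ1, show -(1:ℝ) = -1 by ring, hφm1] at this
  have h1 : a * (-m + 1 + c) ≤ a * φ m := mul_le_mul_of_nonneg_left (key m) ha
  have h2 : b * (m + 1 + c) ≤ b * φ (-m) := by
    have := key (-m)
    have := mul_le_mul_of_nonneg_left this hb
    linarith [this]
  constructor
  · nlinarith
  · nlinarith
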